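/- In the modified AKV model, the subspace V := {e_0, e_1, ψ, ψ', Zψ, Z*ψ'}^⊥ satisfies: Zu ∈ V and Z*u ∈ V for every u ∈ V; the orthogonal projection p_V onto V commutes with P_3 and with |Z|; and consequently p_V commutes with the effective Hamiltonian H_eff. -/

import Mathlib

noncomputable section

open ContinuousLinearMap Finset
open scoped InnerProductSpace

/-- The Hilbert space ℂ^(N+M+1) of the modified AKV model. -/
abbrev AKVSpace (N M : ℕ) := EuclideanSpace ℂ (Fin (N + M + 1))

namespace AKV

variable (N M : ℕ)

/-- standard basis vector -/
def ket (i : Fin (N + M + 1)) : AKVSpace N M := EuclideanSpace.single i 1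

/-- rank-one operator |u⟩⟨v| : x ↦ ⟪v, x⟫ • u -/
def ketbra (u v : AKVSpace N M) : AKVSpace N M →L[ℂ] AKVSpace N M :=
  (innerSL ℂ v).smulRight u

/-- indices 2,…,N of the second level -/
def idx2 : Finset (Fin (N + M + 1)) := univ.filter fun i => 2 ≤ (i : ℕ) ∧ (i : ℕ) ≤ N
/-- indices N+1,…,N+M of the third level -/
def idx3 : Finset (Fin (N + M + 1)) := univ.filter fun i => N + 1 ≤ (i : ℕ)

/-- orthogonal projection onto span{e_0} -/
def P0 : AKVSpace N M →L[ℂ] AKVSpace N M := ketbra N M (ket N M 0) (ket N M 0)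
/-- orthogonal projection onto span{e_1} -/
def P1 : AKVSpace N M →L[ℂ] AKVSpace N M := ketbra N M (ket N M 1) (ket N M 1)
/-- orthogonal projection onto span{e_2,…,e_N} -/
def P2 : AKVSpace N M →L[ℂ] AKVSpace N M := ∑ i ∈ idx2 N M, ketbra N M (ket N M i) (ket N M i)
/-- orthogonal projection onto span{e_{N+1},…,e_{N+M}} -/
def P3 : AKVSpace N M →L[ℂ] AKVSpace N M := ∑ i ∈ idx3 N M, ketbra N M (ket N M i) (ket N M i)

/-- ψ = e_2 + ⋯ + e_N -/
def psi : AKVSpace N M := ∑ i ∈ idx2 N M, ket N M i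
/-- ψ' = e_{N+1} + ⋯ + e_{N+M} -/
def psi' : AKVSpace N M := ∑ i ∈ idx3 N M, ket N M i

/-- |Z| = Z⋆Z -/
def absZ (Z : AKVSpace N M →L[ℂ] AKVSpace N M) : AKVSpace N M →L[ℂ] AKVSpace N M :=
  adjoint Z * Z

/-- hypotheses on the interference operator Z of the modified AKV model -/
def IsAKVZ (hM : 1 ≤ M) (Z : AKVSpace N M →L[ℂ] AKVSpace N M) : Prop :=
  Z = P3 N M * Z * P2 N M ∧
  Z * adjoint Z = P3 N M ∧
  Z (ket N M ⟨N - 1, by omega⟩) = ((Real.sqrt ((N : ℝ) - 1))⁻¹ : ℂ) • psi' N M ∧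
  adjoint Z (ket N M ⟨N + 1, by omega⟩) = ((Real.sqrt ((N : ℝ) - 1))⁻¹ : ℂ) • psi N M

/-- the five Kraus operators -/
def kraus (Γ1m Γ1p Γ2m Γ2p Γ3m : ℝ) (Z : AKVSpace N M →L[ℂ] AKVSpace N M) :
    Fin 5 → AKVSpace N M →L[ℂ] AKVSpace N M :=
  ![((Real.sqrt (2 * Γ1m) : ℝ) : ℂ) • ketbra N M (psi N M) (ket N M 1),
    ((Real.sqrt (2 * ((N : ℝ) - 1) * Γ2m) : ℝ) : ℂ) • Z,
    ((Real.sqrt (2 * Γ3m) : ℝ) : ℂ) • ketbra N M (ket N M 0) (psi' N M),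
    ((Real.sqrt (2 * Γ1p) : ℝ) : ℂ) • ketbra N M (ket N M 1) (psi N M),
    ((Real.sqrt (2 * ((N : ℝ) - 1) * Γ2p) : ℝ) : ℂ) • adjoint Z]

/-- the effective Hamiltonian -/
def Heff (γ1m γ1p γ2m γ2p γ3m : ℝ) (Z : AKVSpace N M →L[ℂ] AKVSpace N M) :
    AKVSpace N M →L[ℂ] AKVSpace N M :=
  (γ1p : ℂ) • ketbra N M (psi N M) (psi N M)
    - (((N : ℂ) - 1) * (γ1m : ℂ)) • ketbra N M (ket N M 1) (ket N M 1)
    + (((N : ℂ) - 1) * (γ2p : ℂ)) • P3 N M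
    - (((N : ℂ) - 1) * (γ2m : ℂ)) • absZ N M Z
    - (γ3m : ℂ) • ketbra N M (psi' N M) (psi' N M)

/-- the predual GKSL generator ℒ_* of the modified AKV model -/
def Lstar (Γ1m Γ1p Γ2m Γ2p Γ3m γ1m γ1p γ2m γ2p γ3m : ℝ)
    (Z ρ : AKVSpace N M →L[ℂ] AKVSpace N M) : AKVSpace N M →L[ℂ] AKVSpace N M :=
  -Complex.I • (Heff N M γ1m γ1p γ2m γ2p γ3m Z * ρ - ρ * Heff N M γ1m γ1p γ2m γ2p γ3m Z)
    + ∑ k : Fin 5,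
        (kraus N M Γ1m Γ1p Γ2m Γ2p Γ3m Z k * ρ * adjoint (kraus N M Γ1m Γ1p Γ2m Γ2p Γ3m Z k)
          - (1 / 2 : ℂ) • (adjoint (kraus N M Γ1m Γ1p Γ2m Γ2p Γ3m Z k) *
                kraus N M Γ1m Γ1p Γ2m Γ2p Γ3m Z k * ρ
              + ρ * (adjoint (kraus N M Γ1m Γ1p Γ2m Γ2p Γ3m Z k) *
                kraus N M Γ1m Γ1p Γ2m Γ2p Γ3m Z k)))

/-- a state: positive semidefinite with trace one -/
def IsState (ρ : AKVSpace N M →L[ℂ] AKVSpace N M) : Prop :=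
  ρ.IsPositive ∧ LinearMap.trace ℂ (AKVSpace N M) ↑ρ = 1

/-- the interaction-free subspace W_D -/
def WD (Z : AKVSpace N M →L[ℂ] AKVSpace N M) : Submodule ℂ (AKVSpace N M) :=
  (Submodule.span ℂ {ket N M 1, psi N M, psi' N M})ᗮ ⊓
    LinearMap.ker (Z : AKVSpace N M →ₗ[ℂ] AKVSpace N M) ⊓ LinearMap.ker (adjoint Z : AKVSpace N M →ₗ[ℂ] AKVSpace N M)

/-- the subspace V = {e_0, e_1, ψ, ψ', Zψ, Z⋆ψ'}^⊥ -/
def Vsub (Z : AKVSpace N M →L[ℂ] AKVSpace N M) : Submodule ℂ (AKVSpace N M) :=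
  (Submodule.span ℂ
    {ket N M 0, ket N M 1, psi N M, psi' N M, Z (psi N M), adjoint Z (psi' N M)})ᗮ

/-- Im|Z| ∩ {ψ, Z⋆ψ'}^⊥ -/
def subA (Z : AKVSpace N M →L[ℂ] AKVSpace N M) : Submodule ℂ (AKVSpace N M) :=
  LinearMap.range (absZ N M Z : AKVSpace N M →ₗ[ℂ] AKVSpace N M) ⊓ (Submodule.span ℂ {psi N M, adjoint Z (psi' N M)})ᗮ

/-- ran P₃ ∩ {ψ', Zψ}^⊥ -/
def subB (Z : AKVSpace N M →L[ℂ] AKVSpace N M) : Submodule ℂ (AKVSpace N M) :=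
  LinearMap.range (P3 N M : AKVSpace N M →ₗ[ℂ] AKVSpace N M) ⊓ (Submodule.span ℂ {psi' N M, Z (psi N M)})ᗮ

/-- the orthogonal projection onto a subspace, as an operator on the whole space -/
def projOp (U : Submodule ℂ (AKVSpace N M)) : AKVSpace N M →L[ℂ] AKVSpace N M :=
  U.subtypeL ∘L U.orthogonalProjectionOnto



/-! ### Auxiliary lemmas -/

section Aux

lemma ketbra_apply' (u v x : AKVSpace N M) :
    ketbra N M u v x = (inner ℂ v x : ℂ) • u := rfl

lemma inner_ket_ket (i j : Fin (N + M + 1)) :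
    (inner ℂ (ket N M i) (ket N M j) : ℂ) = if i = j then 1 else 0 := by
  simp [ket, EuclideanSpace.inner_single_left, EuclideanSpace.single_apply, eq_comm]

lemma adjoint_ketbra (u v : AKVSpace N M) :
    adjoint (ketbra N M u v) = ketbra N M v u := by
  refine ContinuousLinearMap.ext fun x => ?_
  refine ext_inner_left ℂ fun w => ?_
  rw [adjoint_inner_right]
  simp only [ketbra_apply', inner_smul_left, inner_smul_right]
  rw [inner_conj_symm]
  ring

lemma sumProj_apply_ket (s : Finset (Fin (N + M + 1))) (j : Fin (N + M + 1)) :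
    (∑ i ∈ s, ketbra N M (ket N M i) (ket N M i)) (ket N M j)
      = if j ∈ s then ket N M j else 0 := by
  rw [ContinuousLinearMap.sum_apply]
  simp only [ketbra_apply', inner_ket_ket, ite_smul, one_smul, zero_smul]
  exact Finset.sum_ite_eq' s j _

lemma P2_ket (j : Fin (N + M + 1)) :
    P2 N M (ket N M j) = if j ∈ idx2 N M then ket N M j else 0 :=
  sumProj_apply_ket N M _ j

lemma P3_ket (j : Fin (N + M + 1)) :
    P3 N M (ket N M j) = if j ∈ idx3 N M then ket N M j else 0 :=
  sumProj_apply_ket N M _ j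

lemma mem_idx2_iff (i : Fin (N + M + 1)) :
    i ∈ idx2 N M ↔ 2 ≤ (i : ℕ) ∧ (i : ℕ) ≤ N := by simp [idx2]

lemma mem_idx3_iff (i : Fin (N + M + 1)) :
    i ∈ idx3 N M ↔ N + 1 ≤ (i : ℕ) := by simp [idx3]

lemma P2_psi : P2 N M (psi N M) = psi N M := by
  unfold psi
  rw [map_sum]
  exact Finset.sum_congr rfl fun i hi => by rw [P2_ket, if_pos hi]

lemma P3_psi' : P3 N M (psi' N M) = psi' N M := by
  unfold psi'
  rw [map_sum]
  exact Finset.sum_congr rfl fun i hi => by rw [P3_ket, if_pos hi]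

lemma P2_psi' : P2 N M (psi' N M) = 0 := by
  unfold psi'
  rw [map_sum]
  refine Finset.sum_eq_zero fun i hi => ?_
  rw [P2_ket, if_neg]
  rw [mem_idx3_iff] at hi
  rw [mem_idx2_iff]
  omega

lemma P3_psi : P3 N M (psi N M) = 0 := by
  unfold psi
  rw [map_sum]
  refine Finset.sum_eq_zero fun i hi => ?_
  rw [P3_ket, if_neg]
  rw [mem_idx2_iff] at hi
  rw [mem_idx3_iff]
  omega

lemma P2_apply_eq (x : AKVSpace N M) :
    P2 N M x = ∑ i ∈ idx2 N M, (inner ℂ (ket N M i) x : ℂ) • ket N M i := by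
  rw [P2, ContinuousLinearMap.sum_apply]; rfl

lemma P3_apply_eq (x : AKVSpace N M) :
    P3 N M x = ∑ i ∈ idx3 N M, (inner ℂ (ket N M i) x : ℂ) • ket N M i := by
  rw [P3, ContinuousLinearMap.sum_apply]; rfl

lemma P3_P2 (x : AKVSpace N M) : P3 N M (P2 N M x) = 0 := by
  rw [P2_apply_eq, map_sum]
  refine Finset.sum_eq_zero fun i hi => ?_
  rw [map_smul, P3_ket, if_neg, smul_zero]
  rw [mem_idx2_iff] at hi
  rw [mem_idx3_iff]
  omega

lemma P2_P3 (x : AKVSpace N M) : P2 N M (P3 N M x) = 0 := by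
  rw [P3_apply_eq, map_sum]
  refine Finset.sum_eq_zero fun i hi => ?_
  rw [map_smul, P2_ket, if_neg, smul_zero]
  rw [mem_idx3_iff] at hi
  rw [mem_idx2_iff]
  omega

lemma adjoint_P2 : adjoint (P2 N M) = P2 N M := by
  rw [← star_eq_adjoint]
  unfold P2
  rw [star_sum]
  exact Finset.sum_congr rfl fun i _ => by rw [star_eq_adjoint, adjoint_ketbra]

lemma adjoint_P3 : adjoint (P3 N M) = P3 N M := by
  rw [← star_eq_adjoint]
  unfold P3
  rw [star_sum]
  exact Finset.sum_congr rfl fun i _ => by rw [star_eq_adjoint, adjoint_ketbra]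

/-- if `T` maps a generating set into the span, it maps the span into the span -/
lemma span_inv {T : AKVSpace N M →L[ℂ] AKVSpace N M} {s : Set (AKVSpace N M)}
    (h : ∀ x ∈ s, T x ∈ Submodule.span ℂ s) :
    ∀ x ∈ Submodule.span ℂ s, T x ∈ Submodule.span ℂ s := by
  intro x hx
  have hle : Submodule.span ℂ s ≤
      (Submodule.span ℂ s).comap (T : AKVSpace N M →ₗ[ℂ] AKVSpace N M) := by
    rw [Submodule.span_le]
    intro y hy
    simpa [Submodule.mem_comap] using h y hy
  simpa [Submodule.mem_comap] using hle hx

/-- invariance of the orthogonal complement -/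
lemma orthogonal_inv {T : AKVSpace N M →L[ℂ] AKVSpace N M} {U : Submodule ℂ (AKVSpace N M)}
    (h : ∀ x ∈ U, adjoint T x ∈ U) :
    ∀ u ∈ Uᗮ, T u ∈ Uᗮ := by
  intro u hu
  rw [Submodule.mem_orthogonal]
  intro s hs
  rw [← ContinuousLinearMap.adjoint_inner_left]
  exact (Submodule.mem_orthogonal U u).mp hu _ (h s hs)

lemma projOp_apply (K : Submodule ℂ (AKVSpace N M)) (x : AKVSpace N M) :
    projOp N M K x = (K.orthogonalProjectionOnto x : AKVSpace N M) := rfl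

lemma projOp_of_mem {K : Submodule ℂ (AKVSpace N M)} {x : AKVSpace N M} (h : x ∈ K) :
    projOp N M K x = x := by
  rw [projOp_apply]
  exact K.starProjection_eq_self_iff.mpr h

lemma projOp_of_mem_orth {K : Submodule ℂ (AKVSpace N M)} {x : AKVSpace N M} (h : x ∈ Kᗮ) :
    projOp N M K x = 0 := by
  rw [projOp_apply, Submodule.orthogonalProjectionOnto_apply_of_mem_orthogonal h,
    Submodule.coe_zero]

/-- a self-adjoint operator leaving a subspace invariant commutes with the projection onto
its orthogonal complement -/
lemma projOp_comm_of_invariant {U : Submodule ℂ (AKVSpace N M)}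
    {T : AKVSpace N M →L[ℂ] AKVSpace N M} (hT : adjoint T = T)
    (hU : ∀ x ∈ U, T x ∈ U) :
    projOp N M Uᗮ * T = T * projOp N M Uᗮ := by
  have hUp : ∀ u ∈ Uᗮ, T u ∈ Uᗮ :=
    orthogonal_inv N M (fun x hx => by rw [hT]; exact hU x hx)
  refine ContinuousLinearMap.ext fun x => ?_
  have hv : projOp N M Uᗮ x ∈ Uᗮ := by
    rw [projOp_apply]; exact (Uᗮ.orthogonalProjectionOnto x).2
  have hw : x - projOp N M Uᗮ x ∈ U := by
    have h2 := Submodule.sub_starProjection_mem_orthogonal (K := Uᗮ) x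
    rwa [Submodule.orthogonal_orthogonal] at h2
  have hx : T x = T (projOp N M Uᗮ x) + T (x - projOp N M Uᗮ x) := by
    rw [← map_add]; congr 1; abel
  simp only [ContinuousLinearMap.mul_apply]
  rw [hx, map_add, projOp_of_mem N M (hUp _ hv),
    projOp_of_mem_orth N M (Submodule.le_orthogonal_orthogonal U (hU _ hw)), add_zero]

/-- span invariance from the six generators -/
lemma span_inv6 {T : AKVSpace N M →L[ℂ] AKVSpace N M} {a b d e f g : AKVSpace N M}
    (ha : T a ∈ Submodule.span ℂ ({a, b, d, e, f, g} : Set (AKVSpace N M)))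
    (hb : T b ∈ Submodule.span ℂ ({a, b, d, e, f, g} : Set (AKVSpace N M)))
    (hd : T d ∈ Submodule.span ℂ ({a, b, d, e, f, g} : Set (AKVSpace N M)))
    (he : T e ∈ Submodule.span ℂ ({a, b, d, e, f, g} : Set (AKVSpace N M)))
    (hf : T f ∈ Submodule.span ℂ ({a, b, d, e, f, g} : Set (AKVSpace N M)))
    (hg : T g ∈ Submodule.span ℂ ({a, b, d, e, f, g} : Set (AKVSpace N M))) :
    ∀ x ∈ Submodule.span ℂ ({a, b, d, e, f, g} : Set (AKVSpace N M)),
      T x ∈ Submodule.span ℂ ({a, b, d, e, f, g} : Set (AKVSpace N M)) := by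
  refine span_inv N M fun x hx => ?_
  simp only [Set.mem_insert_iff, Set.mem_singleton_iff] at hx
  rcases hx with rfl | rfl | rfl | rfl | rfl | rfl <;> assumption

end Aux

set_option maxHeartbeats 1000000 in
/-- In the modified AKV model, the subspace `V = {e₀, e₁, ψ, ψ', Zψ, Z⋆ψ'}^⊥` is invariant
under `Z` and `Z⋆`, and the orthogonal projection `p_V` onto `V` commutes with `P₃`, with
`|Z|`, and with the effective Hamiltonian `H_eff`. -/
theorem projV_subharmonic
    (N M : ℕ) (hN : 3 ≤ N) (hM1 : 1 ≤ M) (hM2 : M ≤ N - 1)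
    (γ1m γ1p γ2m γ2p γ3m : ℝ)
    (hγ : 0 < γ1m ∧ 0 < γ1p ∧ 0 < γ2m ∧ 0 < γ2p ∧ 0 < γ3m)
    (Z : AKVSpace N M →L[ℂ] AKVSpace N M) (hZ : IsAKVZ N M hM1 Z) :
    (∀ u ∈ Vsub N M Z, Z u ∈ Vsub N M Z ∧ ContinuousLinearMap.adjoint Z u ∈ Vsub N M Z) ∧
    projOp N M (Vsub N M Z) * P3 N M = P3 N M * projOp N M (Vsub N M Z) ∧
    projOp N M (Vsub N M Z) * absZ N M Z = absZ N M Z * projOp N M (Vsub N M Z) ∧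
    projOp N M (Vsub N M Z) * Heff N M γ1m γ1p γ2m γ2p γ3m Z
      = Heff N M γ1m γ1p γ2m γ2p γ3m Z * projOp N M (Vsub N M Z) := by
  obtain ⟨hZ1, hZ2, hZ3, hZ4⟩ := hZ
  -- the scalar c = (√(N-1))⁻¹ is nonzero
  have hsq : (0 : ℝ) < Real.sqrt ((N : ℝ) - 1) := by
    apply Real.sqrt_pos.mpr
    have : (3 : ℝ) ≤ (N : ℝ) := by exact_mod_cast hN
    linarith
  set c : ℂ := ((Real.sqrt ((N : ℝ) - 1) : ℝ) : ℂ)⁻¹ with hcdef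
  have hc : c ≠ 0 := by
    rw [hcdef]
    exact inv_ne_zero (Complex.ofReal_ne_zero.mpr (ne_of_gt hsq))
  -- Z kills anything killed by P2; Z* kills anything killed by P3
  have hZadj : adjoint Z = P2 N M * adjoint Z * P3 N M := by
    conv_lhs => rw [hZ1]
    rw [← star_eq_adjoint, star_mul, star_mul, star_eq_adjoint, star_eq_adjoint,
      star_eq_adjoint, adjoint_P2, adjoint_P3, mul_assoc]
  have hZker : ∀ x, P2 N M x = 0 → Z x = 0 := by
    intro x hx
    conv_lhs => rw [hZ1]
    show P3 N M (Z (P2 N M x)) = 0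
    rw [hx, map_zero, map_zero]
  have hZsker : ∀ x, P3 N M x = 0 → adjoint Z x = 0 := by
    intro x hx
    conv_lhs => rw [hZadj]
    show P2 N M (adjoint Z (P3 N M x)) = 0
    rw [hx, map_zero, map_zero]
  have hZZs : ∀ x, Z (adjoint Z x) = P3 N M x := fun x => by
    calc Z (adjoint Z x) = (Z * adjoint Z) x := rfl
    _ = P3 N M x := by rw [hZ2]
  -- key computations
  have hval : (((⟨N + 1, by omega⟩ : Fin (N + M + 1))) : ℕ) = N + 1 := rfl
  have hn1mem : (⟨N + 1, by omega⟩ : Fin (N + M + 1)) ∈ idx3 N M := by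
    rw [mem_idx3_iff, hval]
  have hn1mem2 : (⟨N + 1, by omega⟩ : Fin (N + M + 1)) ∉ idx2 N M := by
    rw [mem_idx2_iff, hval]; omega
  have hpsi_eq : psi N M = (c⁻¹ : ℂ) • adjoint Z (ket N M ⟨N + 1, by omega⟩) := by
    rw [hZ4, smul_smul, inv_mul_cancel₀ hc, one_smul]
  have hZpsi : Z (psi N M) = (c⁻¹ : ℂ) • ket N M ⟨N + 1, by omega⟩ := by
    rw [hpsi_eq, map_smul, hZZs, P3_ket, if_pos hn1mem]
  have hZsZpsi : adjoint Z (Z (psi N M)) = psi N M := by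
    rw [hZpsi, map_smul, hZ4, smul_smul, inv_mul_cancel₀ hc, one_smul]
  have hZZspsi' : Z (adjoint Z (psi' N M)) = psi' N M := by
    rw [hZZs, P3_psi']
  have hket0 : (((0 : Fin (N + M + 1))) : ℕ) = 0 := rfl
  have hket1 : (((1 : Fin (N + M + 1))) : ℕ) = 1 := by
    have : (1 : ℕ) < N + M + 1 := by omega
    simp [Fin.val_one', Nat.mod_eq_of_lt this]
  have hP2k0 : P2 N M (ket N M 0) = 0 := by
    rw [P2_ket, if_neg]; rw [mem_idx2_iff, hket0]; omega
  have hP2k1 : P2 N M (ket N M 1) = 0 := by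
    rw [P2_ket, if_neg]; rw [mem_idx2_iff, hket1]; omega
  have hP3k0 : P3 N M (ket N M 0) = 0 := by
    rw [P3_ket, if_neg]; rw [mem_idx3_iff, hket0]; omega
  have hP3k1 : P3 N M (ket N M 1) = 0 := by
    rw [P3_ket, if_neg]; rw [mem_idx3_iff, hket1]; omega
  have hZ0 : Z (ket N M 0) = 0 := hZker _ hP2k0
  have hZ1' : Z (ket N M 1) = 0 := hZker _ hP2k1
  have hZpsi' : Z (psi' N M) = 0 := hZker _ (P2_psi' N M)
  have hZs0 : adjoint Z (ket N M 0) = 0 := hZsker _ hP3k0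
  have hZs1 : adjoint Z (ket N M 1) = 0 := hZsker _ hP3k1
  have hZspsi : adjoint Z (psi N M) = 0 := hZsker _ (P3_psi N M)
  have hZZpsi : Z (Z (psi N M)) = 0 := by
    apply hZker
    rw [hZpsi, map_smul, P2_ket, if_neg hn1mem2, smul_zero]
  have hP3Zspsi' : P3 N M (adjoint Z (psi' N M)) = 0 := by
    conv_lhs => rw [hZadj]
    show P3 N M (P2 N M (adjoint Z (P3 N M (psi' N M)))) = 0
    rw [P3_P2]
  have hZsZspsi' : adjoint Z (adjoint Z (psi' N M)) = 0 := hZsker _ hP3Zspsi'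
  have hP3Zpsi : P3 N M (Z (psi N M)) = Z (psi N M) := by
    rw [hZpsi, map_smul, P3_ket, if_pos hn1mem]
  -- the generating set and its span
  set S : Set (AKVSpace N M) :=
    {ket N M 0, ket N M 1, psi N M, psi' N M, Z (psi N M), adjoint Z (psi' N M)} with hS
  set U : Submodule ℂ (AKVSpace N M) := Submodule.span ℂ S with hU
  have hVdef : Vsub N M Z = Uᗮ := rfl
  have m0 : ket N M 0 ∈ U := Submodule.subset_span (by rw [hS]; simp)
  have m1 : ket N M 1 ∈ U := Submodule.subset_span (by rw [hS]; simp)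
  have mpsi : psi N M ∈ U := Submodule.subset_span (by rw [hS]; simp)
  have mpsi' : psi' N M ∈ U := Submodule.subset_span (by rw [hS]; simp)
  have mZpsi : Z (psi N M) ∈ U := Submodule.subset_span (by rw [hS]; simp)
  have mZspsi' : adjoint Z (psi' N M) ∈ U := Submodule.subset_span (by rw [hS]; simp)
  -- span invariances
  have hZspan : ∀ x ∈ U, Z x ∈ U := by
    refine span_inv6 N M ?_ ?_ ?_ ?_ ?_ ?_
    · rw [hZ0]; exact zero_mem U
    · rw [hZ1']; exact zero_mem U
    · exact mZpsi
    · rw [hZpsi']; exact zero_mem U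
    · rw [hZZpsi]; exact zero_mem U
    · rw [hZZspsi']; exact mpsi'
  have hZsspan : ∀ x ∈ U, adjoint Z x ∈ U := by
    refine span_inv6 N M ?_ ?_ ?_ ?_ ?_ ?_
    · rw [hZs0]; exact zero_mem U
    · rw [hZs1]; exact zero_mem U
    · rw [hZspsi]; exact zero_mem U
    · exact mZspsi'
    · rw [hZsZpsi]; exact mpsi
    · rw [hZsZspsi']; exact zero_mem U
  have hP3span : ∀ x ∈ U, P3 N M x ∈ U := by
    refine span_inv6 N M ?_ ?_ ?_ ?_ ?_ ?_
    · rw [hP3k0]; exact zero_mem U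
    · rw [hP3k1]; exact zero_mem U
    · rw [P3_psi]; exact zero_mem U
    · rw [P3_psi']; exact mpsi'
    · rw [hP3Zpsi]; exact mZpsi
    · rw [hP3Zspsi']; exact zero_mem U
  have habsZ : ∀ x, absZ N M Z x = adjoint Z (Z x) := fun x => rfl
  have habsZspan : ∀ x ∈ U, absZ N M Z x ∈ U := by
    refine span_inv6 N M ?_ ?_ ?_ ?_ ?_ ?_
    · rw [habsZ, hZ0, map_zero]; exact zero_mem U
    · rw [habsZ, hZ1', map_zero]; exact zero_mem U
    · rw [habsZ, hZsZpsi]; exact mpsi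
    · rw [habsZ, hZpsi', map_zero]; exact zero_mem U
    · rw [habsZ, hZZpsi, map_zero]; exact zero_mem U
    · rw [habsZ, hZZspsi']; exact mZspsi'
  -- self-adjointness
  have hP3sa : adjoint (P3 N M) = P3 N M := adjoint_P3 N M
  have habsZsa : adjoint (absZ N M Z) = absZ N M Z := by
    rw [absZ, ← star_eq_adjoint, star_mul, star_eq_adjoint, star_eq_adjoint, adjoint_adjoint]
  have hHsa : adjoint (Heff N M γ1m γ1p γ2m γ2p γ3m Z) = Heff N M γ1m γ1p γ2m γ2p γ3m Z := by
    rw [Heff, ← star_eq_adjoint]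
    simp only [star_sub, star_add, star_smul, star_eq_adjoint, adjoint_ketbra, adjoint_P3,
      habsZsa]
    simp only [← Complex.ofReal_natCast, Complex.ofReal_sub, Complex.ofReal_one,
      Complex.ofReal_mul, star_mul', Complex.star_def, map_sub, map_one, Complex.conj_ofReal]
  have hHspan : ∀ x ∈ U, Heff N M γ1m γ1p γ2m γ2p γ3m Z x ∈ U := by
    intro x hx
    rw [Heff]
    simp only [ContinuousLinearMap.sub_apply, ContinuousLinearMap.add_apply,
      ContinuousLinearMap.smul_apply, ketbra_apply']
    refine sub_mem (sub_mem (add_mem (sub_mem ?_ ?_) ?_) ?_) ?_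
    · exact Submodule.smul_mem U _ (Submodule.smul_mem U _ mpsi)
    · exact Submodule.smul_mem U _ (Submodule.smul_mem U _ m1)
    · exact Submodule.smul_mem U _ (hP3span x hx)
    · exact Submodule.smul_mem U _ (habsZspan x hx)
    · exact Submodule.smul_mem U _ (Submodule.smul_mem U _ mpsi')
  -- conclusion
  refine ⟨?_, ?_, ?_, ?_⟩
  · intro u hu
    rw [hVdef] at hu ⊢
    exact ⟨orthogonal_inv N M hZsspan u hu,
      orthogonal_inv N M (fun x hx => by rw [adjoint_adjoint]; exact hZspan x hx) u hu⟩
  · rw [hVdef]; exact projOp_comm_of_invariant N M hP3sa hP3span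
  · rw [hVdef]; exact projOp_comm_of_invariant N M habsZsa habsZspan
  · rw [hVdef]; exact projOp_comm_of_invariant N M hHsa hHspan

end AKV
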